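/- Let F : ℝⁿ → ℝⁿ be a payment-free Shapley operator, i.e., monotone, additively homogeneous and positively homogeneous, and let ε > 0. Then there exists a map G : ℝⁿ → ℝⁿ such that F_i(x) ≤ G_i(x) ≤ F_i(x) + ε‖x‖_∞ for all x ∈ ℝⁿ and all i ∈ {1,…,n}, and such that each coordinate of G has the form G_i(x) = min_{a ∈ A_i} max_{b ∈ B_{i,a}} ⟨P_i^{ab}, x⟩, where the A_i and B_{i,a} are finite sets and every P_i^{ab} is a stochastic vector of ℝⁿ with at most two positive coordinates. -/

import Mathlib

open Finset

namespace Stmt18Aux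

variable {n : ℕ}

noncomputable def evec (j : Fin n) : Fin n → ℝ := fun l => if l = j then 1 else 0

noncomputable def pvec (z : Fin n → ℝ) (j k : Fin n) : Fin n → ℝ :=
  fun l => (if l = j then -z k else 0) / (z j - z k) + (if l = k then z j else 0) / (z j - z k)

noncomputable def Bset (z : Fin n → ℝ) : Finset (Fin n → ℝ) :=
  ((univ.filter fun j => z j ≤ 0).image evec) ∪
  (((univ ×ˢ univ).filter fun q : Fin n × Fin n => 0 < z q.1 ∧ z q.2 < 0).image
    fun q => pvec z q.1 q.2)

lemma mem_Bset {z : Fin n → ℝ} {b : Fin n → ℝ} : b ∈ Bset z ↔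
    (∃ j, z j ≤ 0 ∧ b = evec j) ∨ ∃ j k, (0 < z j ∧ z k < 0) ∧ b = pvec z j k := by
  simp only [Bset, Finset.mem_union, Finset.mem_image, Finset.mem_filter, Finset.mem_product,
    Finset.mem_univ, true_and, Finset.mem_filter, Prod.exists]
  constructor
  · rintro (⟨j, hj, rfl⟩ | ⟨j, k, h, rfl⟩)
    · exact Or.inl ⟨j, hj, rfl⟩
    · exact Or.inr ⟨j, k, h, rfl⟩
  · rintro (⟨j, hj, rfl⟩ | ⟨j, k, h, rfl⟩)
    · exact Or.inl ⟨j, hj, rfl⟩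
    · exact Or.inr ⟨j, k, h, rfl⟩

lemma sum_evec_mul (j : Fin n) (x : Fin n → ℝ) : ∑ l, evec j l * x l = x j := by
  simp [evec]

lemma ne_of_pvec {z : Fin n → ℝ} {j k : Fin n} (h1 : 0 < z j) (h2 : z k < 0) : j ≠ k := by
  rintro rfl; linarith

lemma sum_pvec_mul {z : Fin n → ℝ} {j k : Fin n} (h1 : 0 < z j) (h2 : z k < 0) (x : Fin n → ℝ) :
    ∑ l, pvec z j k l * x l = (-z k * x j + z j * x k) / (z j - z k) := by
  have hjk := ne_of_pvec h1 h2
  simp only [pvec, add_mul, Finset.sum_add_distrib, div_mul_eq_mul_div, ite_mul, zero_mul]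
  rw [← Finset.sum_div, ← Finset.sum_div, Finset.sum_ite_eq' univ j, Finset.sum_ite_eq' univ k]
  simp [add_div]

lemma pvec_nonneg {z : Fin n → ℝ} {j k : Fin n} (h1 : 0 < z j) (h2 : z k < 0) (l : Fin n) :
    0 ≤ pvec z j k l := by
  have hd : 0 < z j - z k := by linarith
  unfold pvec
  have h1' : (0:ℝ) ≤ -z k := by linarith
  have h2' : (0:ℝ) ≤ z j := le_of_lt h1
  apply add_nonneg <;> apply div_nonneg _ (le_of_lt hd) <;> split <;> simp [h1', h2']

lemma sum_pvec {z : Fin n → ℝ} {j k : Fin n} (h1 : 0 < z j) (h2 : z k < 0) :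
    ∑ l, pvec z j k l = 1 := by
  have := sum_pvec_mul h1 h2 (fun _ => 1)
  simp only [mul_one] at this
  rw [this]
  have hd : z j - z k ≠ 0 := by intro h; linarith
  field_simp
  ring

lemma pvec_dot_z {z : Fin n → ℝ} {j k : Fin n} (h1 : 0 < z j) (h2 : z k < 0) :
    ∑ l, pvec z j k l * z l = 0 := by
  rw [sum_pvec_mul h1 h2]
  have hd : z j - z k ≠ 0 := by intro h; linarith
  field_simp
  ring

lemma pvec_support {z : Fin n → ℝ} {j k : Fin n} (h1 : 0 < z j) (h2 : z k < 0) :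
    (univ.filter fun l => 0 < pvec z j k l).card ≤ 2 := by
  have hjk := ne_of_pvec h1 h2
  have hsub : (univ.filter fun l => 0 < pvec z j k l) ⊆ {j, k} := by
    intro l hl
    simp only [Finset.mem_filter] at hl
    by_contra hmem
    simp only [Finset.mem_insert, Finset.mem_singleton, not_or] at hmem
    have : pvec z j k l = 0 := by simp [pvec, hmem.1, hmem.2]
    linarith [hl.2]
  calc (univ.filter fun l => 0 < pvec z j k l).card ≤ ({j, k} : Finset (Fin n)).card :=
        Finset.card_le_card hsub
    _ ≤ 2 := by
        apply le_trans (Finset.card_insert_le _ _); simp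

lemma evec_support (j : Fin n) : (univ.filter fun l => 0 < evec j l).card ≤ 2 := by
  have hsub : (univ.filter fun l => 0 < evec j l) ⊆ {j} := by
    intro l hl
    rw [Finset.mem_filter] at hl
    simp only [evec] at hl
    simp only [Finset.mem_singleton]
    by_contra h
    rw [if_neg h] at hl
    linarith [hl.2]
  exact le_trans (Finset.card_le_card hsub) (by simp)

lemma Bset_stochastic {z : Fin n → ℝ} {b : Fin n → ℝ} (hb : b ∈ Bset z) :
    (∀ j, 0 ≤ b j) ∧ (∑ j, b j = 1) ∧ (univ.filter fun j => 0 < b j).card ≤ 2 := by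
  rcases mem_Bset.1 hb with ⟨j, _, rfl⟩ | ⟨j, k, ⟨h1, h2⟩, rfl⟩
  · refine ⟨fun l => ?_, by simp [evec], evec_support j⟩
    unfold evec; split <;> norm_num
  · exact ⟨pvec_nonneg h1 h2, sum_pvec h1 h2, pvec_support h1 h2⟩

lemma Bset_dot_nonpos {z : Fin n → ℝ} {b : Fin n → ℝ} (hb : b ∈ Bset z) :
    ∑ l, b l * z l ≤ 0 := by
  rcases mem_Bset.1 hb with ⟨j, hj, rfl⟩ | ⟨j, k, ⟨h1, h2⟩, rfl⟩
  · rw [sum_evec_mul]; exact hj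
  · rw [pvec_dot_z h1 h2]

lemma Bset_nonempty {z : Fin n → ℝ} (hz : ∃ j, z j ≤ 0) : (Bset z).Nonempty := by
  obtain ⟨j, hj⟩ := hz
  exact ⟨evec j, mem_Bset.2 (Or.inl ⟨j, hj, rfl⟩)⟩

end Stmt18Aux

namespace Stmt18Aux

noncomputable def msup {n : ℕ} (s : Finset (Fin n → ℝ)) (x : Fin n → ℝ) : ℝ :=
  if h : s.Nonempty then s.sup' h (fun b => ∑ j, b j * x j) else 0

lemma msup_isGreatest {n : ℕ} {s : Finset (Fin n → ℝ)} (hs : s.Nonempty) (x : Fin n → ℝ) :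
    IsGreatest {r : ℝ | ∃ b ∈ s, r = ∑ j, b j * x j} (msup s x) := by
  unfold msup; rw [dif_pos hs]
  constructor
  · obtain ⟨b, hbmem, hbeq⟩ := Finset.exists_mem_eq_sup' hs (fun b => ∑ j, b j * x j)
    exact ⟨b, hbmem, hbeq⟩
  · rintro r ⟨b, hbmem, rfl⟩
    exact Finset.le_sup' (fun b => ∑ j, b j * x j) hbmem

lemma le_msup {n : ℕ} {s : Finset (Fin n → ℝ)} {b : Fin n → ℝ} (hb : b ∈ s) (x : Fin n → ℝ) :
    ∑ j, b j * x j ≤ msup s x :=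
  (msup_isGreatest ⟨b, hb⟩ x).2 ⟨b, hb, rfl⟩

lemma msup_le {n : ℕ} {s : Finset (Fin n → ℝ)} (hs : s.Nonempty) {x : Fin n → ℝ} {m : ℝ}
    (h : ∀ b ∈ s, ∑ j, b j * x j ≤ m) : msup s x ≤ m := by
  unfold msup; rw [dif_pos hs]
  exact Finset.sup'_le _ _ h

end Stmt18Aux

open Stmt18Aux



/-- Let `F : ℝⁿ → ℝⁿ` be a payment-free Shapley operator (monotone, additively
homogeneous and positively homogeneous), and let `ε > 0`. Then there is a map `G : ℝⁿ → ℝⁿ`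
with `F_i x ≤ G_i x ≤ F_i x + ε ‖x‖_∞` for all `x` and `i`, such that each coordinate of `G`
is a finite minimax `G_i x = min_{a ∈ A_i} max_{b ∈ B_{i,a}} ⟨b, x⟩`, where the `A_i` and
`B_{i,a}` are finite sets and each `b` is a stochastic vector with at most two positive
coordinates. (Here, `‖x‖` on `Fin n → ℝ` is the sup-norm.) -/
theorem stmt18 {n : ℕ} (hn : 0 < n) (F : (Fin n → ℝ) → Fin n → ℝ)
    (hmono : Monotone F)
    (hadd : ∀ (x : Fin n → ℝ) (c : ℝ), F (x + c • (1 : Fin n → ℝ)) = F x + c • 1)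
    (hpos : ∀ (c : ℝ), 0 ≤ c → ∀ x : Fin n → ℝ, F (c • x) = c • F x)
    (ε : ℝ) (hε : 0 < ε) :
    ∃ G : (Fin n → ℝ) → Fin n → ℝ,
      (∀ (x : Fin n → ℝ) (i : Fin n), F x i ≤ G x i ∧ G x i ≤ F x i + ε * ‖x‖) ∧
      ∀ i : Fin n, ∃ (A : Finset (Fin n → ℝ)) (B : (Fin n → ℝ) → Finset (Fin n → ℝ)),
        A.Nonempty ∧
        (∀ a ∈ A, ∀ b ∈ B a,
          (∀ j, 0 ≤ b j) ∧ (∑ j, b j = 1) ∧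
            (Finset.univ.filter fun j => 0 < b j).card ≤ 2) ∧
        ∀ x : Fin n → ℝ,
          IsLeast {r : ℝ | ∃ a ∈ A,
            IsGreatest {s : ℝ | ∃ b ∈ B a, s = ∑ j, b j * x j} r} (G x i) := by
  classical
  haveI : Nonempty (Fin n) := ⟨⟨0, hn⟩⟩
  have huniv : (Finset.univ : Finset (Fin n)).Nonempty := ⟨Classical.arbitrary _, Finset.mem_univ _⟩
  -- F 0 = 0
  have hF0 : F 0 = 0 := by
    have h := hpos 0 le_rfl 0
    simpa using h
  -- the scalar multiples of 1
  have hone : ∀ c : ℝ, F (c • (1 : Fin n → ℝ)) = c • (1 : Fin n → ℝ) := by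
    intro c
    have h := hadd 0 c
    rwa [zero_add, hF0, zero_add] at h
  -- key upper bound: for λ ≥ 0, F x i ≤ max_j (x j - λ z j) whenever F z i = 0
  have keyineq : ∀ (z x : Fin n → ℝ) (i : Fin n), F z i = 0 → ∀ lam : ℝ, 0 ≤ lam →
      ∃ j, F x i ≤ x j - lam * z j := by
    intro z x i hz lam hlam
    obtain ⟨j, _, hj⟩ := Finset.exists_mem_eq_sup' huniv (fun j => x j - lam * z j)
    set m := Finset.univ.sup' huniv (fun j => x j - lam * z j) with hm
    refine ⟨j, ?_⟩
    have hxle : x ≤ lam • z + m • (1 : Fin n → ℝ) := by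
      intro l
      have hl := Finset.le_sup' (fun j => x j - lam * z j) (Finset.mem_univ l)
      simp only [Pi.add_apply, Pi.smul_apply, Pi.one_apply, smul_eq_mul, mul_one]
      rw [← hm] at hl
      linarith
    have h2 := hmono hxle
    rw [hadd (lam • z) m, hpos lam hlam z] at h2
    have h3 := h2 i
    simp only [Pi.add_apply, Pi.smul_apply, Pi.one_apply, smul_eq_mul, mul_one] at h3
    rw [hz, mul_zero, zero_add] at h3
    rwa [hj] at h3
  -- F y i is at least the min coordinate
  have hminle : ∀ (y : Fin n → ℝ) (i : Fin n), ∃ j, y j - F y i ≤ 0 := by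
    intro y i
    obtain ⟨j0, _, hj0⟩ := Finset.exists_min_image Finset.univ y huniv
    refine ⟨j0, ?_⟩
    have hle : (y j0) • (1 : Fin n → ℝ) ≤ y := by
      intro l
      simp only [Pi.smul_apply, Pi.one_apply, smul_eq_mul, mul_one]
      exact hj0 l (Finset.mem_univ l)
    have h2 := hmono hle i
    rw [hone (y j0)] at h2
    simp only [Pi.smul_apply, Pi.one_apply, smul_eq_mul, mul_one] at h2
    linarith
  -- nonexpansiveness
  have hnonexp : ∀ (a b : Fin n → ℝ) (i : Fin n), F a i ≤ F b i + ‖a - b‖ := by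
    intro a b i
    have h1 : a ≤ b + ‖a - b‖ • (1 : Fin n → ℝ) := by
      intro l
      have h2 : a l - b l ≤ ‖a - b‖ := by
        have h3 : (a - b) l ≤ |(a - b) l| := le_abs_self _
        have h4 : |(a - b) l| ≤ ‖a - b‖ := by
          rw [← Real.norm_eq_abs]
          exact norm_le_pi_norm (a - b) l
        simpa using h3.trans h4
      simp only [Pi.add_apply, Pi.smul_apply, Pi.one_apply, smul_eq_mul, mul_one]
      linarith
    have h5 := hmono h1 i
    rw [hadd] at h5
    simpa using h5
  -- key selection lemma
  have hkey : ∀ (z : Fin n → ℝ) (i : Fin n), F z i = 0 → ∀ x : Fin n → ℝ,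
      ∃ b ∈ Bset z, F x i ≤ ∑ j, b j * x j := by
    intro z i hz x
    by_contra hcon
    push_neg at hcon
    set c := F x i with hc
    have he : ∀ j, z j ≤ 0 → x j < c := by
      intro j hj
      have h := hcon _ (mem_Bset.2 (Or.inl ⟨j, hj, rfl⟩))
      rwa [sum_evec_mul] at h
    have hp : ∀ j k, 0 < z j → z k < 0 → (x j - c) / z j < (x k - c) / z k := by
      intro j k h1 h2
      have hb := hcon _ (mem_Bset.2 (Or.inr ⟨j, k, ⟨h1, h2⟩, rfl⟩))
      rw [sum_pvec_mul h1 h2] at hb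
      rw [div_lt_iff₀ (by linarith : (0:ℝ) < z j - z k)] at hb
      have hkey2 : (x k - c) / z k = (-(x k - c)) / (-(z k)) := by
        rw [neg_div_neg_eq]
      rw [hkey2, div_lt_div_iff₀ h1 (by linarith : (0:ℝ) < -(z k))]
      nlinarith
    set M := Finset.univ.sup' huniv (fun j => if 0 < z j then (x j - c) / z j else 0) with hM
    have hMle : ∀ j, 0 < z j → (x j - c) / z j ≤ M := by
      intro j hj
      have := Finset.le_sup' (fun j => if 0 < z j then (x j - c) / z j else 0) (Finset.mem_univ j)
      rw [if_pos hj] at this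
      rw [hM]
      exact this
    by_cases hneg : ∃ k, z k < 0
    · obtain ⟨k0, hk0⟩ := hneg
      set Negf := Finset.univ.filter (fun k => z k < 0) with hNegf
      have hNe : Negf.Nonempty := ⟨k0, by simp [hNegf, hk0]⟩
      set μ := Negf.inf' hNe (fun k => (x k - c) / z k) with hμ
      have hμle : ∀ k, z k < 0 → μ ≤ (x k - c) / z k := by
        intro k hk
        exact Finset.inf'_le _ (by simp [hNegf, hk])
      have hμpos : 0 < μ := by
        rw [hμ, Finset.lt_inf'_iff]
        intro k hk
        rw [hNegf, Finset.mem_filter] at hk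
        have hxk : x k < c := he k (le_of_lt hk.2)
        exact div_pos_of_neg_of_neg (by linarith) hk.2
      have hMμ : max M 0 < μ := by
        rw [max_lt_iff]
        refine ⟨?_, hμpos⟩
        rw [hM, Finset.sup'_lt_iff]
        intro j _
        by_cases hj : 0 < z j
        · rw [if_pos hj, hμ, Finset.lt_inf'_iff]
          intro k hk
          rw [hNegf, Finset.mem_filter] at hk
          exact hp j k hj hk.2
        · rw [if_neg hj]
          exact hμpos
      set lam := (max M 0 + μ) / 2 with hlam
      have hlam0 : 0 ≤ lam := by
        have := le_max_right M 0
        rw [hlam]; linarith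
      have hlamM : M < lam := by
        have := le_max_left M 0
        rw [hlam]; linarith [hMμ]
      have hlamμ : lam < μ := by
        rw [hlam]; linarith [hMμ]
      obtain ⟨j, hj⟩ := keyineq z x i hz lam hlam0
      rcases lt_trichotomy (z j) 0 with hzj | hzj | hzj
      · have h6 := hμle j hzj
        have h7 : lam < (x j - c) / z j := lt_of_lt_of_le hlamμ h6
        rw [lt_div_iff_of_neg hzj] at h7
        linarith
      · have h8 := he j (le_of_eq hzj)
        rw [hzj, mul_zero] at hj
        linarith
      · have h6 := hMle j hzj
        have h7 : (x j - c) / z j < lam := lt_of_le_of_lt h6 hlamM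
        rw [div_lt_iff₀ hzj] at h7
        linarith
    · push_neg at hneg
      set lam := max M 0 + 1 with hlam
      have hlam0 : 0 ≤ lam := by
        have := le_max_right M 0
        rw [hlam]; linarith
      have hlamM : M < lam := by
        have := le_max_left M 0
        rw [hlam]; linarith
      obtain ⟨j, hj⟩ := keyineq z x i hz lam hlam0
      rcases eq_or_lt_of_le (hneg j) with hzj | hzj
      · have h8 := he j (le_of_eq hzj.symm)
        rw [← hzj, mul_zero] at hj
        linarith
      · have h6 := hMle j hzj
        have h7 : (x j - c) / z j < lam := lt_of_le_of_lt h6 hlamM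
        rw [div_lt_iff₀ hzj] at h7
        linarith
  -- finite net on the unit sphere
  obtain ⟨N, hN⟩ : ∃ N : Finset (Fin n → ℝ), ∀ u : Fin n → ℝ, ‖u‖ = 1 →
      ∃ y ∈ N, ‖u - y‖ < ε / 2 := by
    have hc : IsCompact (Metric.sphere (0 : Fin n → ℝ) 1) := isCompact_sphere 0 1
    have htb := hc.totallyBounded
    rw [Metric.totallyBounded_iff] at htb
    obtain ⟨t, hfin, hcov⟩ := htb (ε / 2) (by linarith)
    refine ⟨hfin.toFinset, fun u hu => ?_⟩
    have hmem : u ∈ Metric.sphere (0 : Fin n → ℝ) 1 := by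
      simp [mem_sphere_iff_norm, hu]
    obtain ⟨y, hy, hball⟩ := Set.mem_iUnion₂.1 (hcov hmem)
    exact ⟨y, hfin.mem_toFinset.2 hy, by rwa [Metric.mem_ball, dist_eq_norm] at hball⟩
  -- the A sets
  set A : Fin n → Finset (Fin n → ℝ) :=
    fun i => insert 0 (N.image (fun y => y - F y i • (1 : Fin n → ℝ))) with hAdef
  have hAne : ∀ i, (A i).Nonempty := fun i => ⟨0, Finset.mem_insert_self _ _⟩
  have hA0 : ∀ i, ∀ a ∈ A i, F a i = 0 := by
    intro i a ha
    rw [hAdef] at ha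
    rcases Finset.mem_insert.1 ha with rfl | hmem
    · rw [hF0]; rfl
    · obtain ⟨y, _, rfl⟩ := Finset.mem_image.1 hmem
      have h1 := hadd y (-(F y i))
      have h2 : y + (-(F y i)) • (1 : Fin n → ℝ) = y - F y i • (1 : Fin n → ℝ) := by
        ext l; simp; ring
      rw [h2] at h1
      rw [h1]
      simp
  have hBne : ∀ i, ∀ a ∈ A i, (Bset a).Nonempty := by
    intro i a ha
    apply Bset_nonempty
    obtain ⟨j, hj⟩ := hminle a i
    rw [hA0 i a ha] at hj
    exact ⟨j, by linarith⟩
  set G : (Fin n → ℝ) → Fin n → ℝ :=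
    fun x i => (A i).inf' (hAne i) (fun a => msup (Bset a) x) with hGdef
  refine ⟨G, ?_, ?_⟩
  · -- the bounds
    intro x i
    constructor
    · -- lower bound
      rw [hGdef]
      apply Finset.le_inf'
      intro a ha
      obtain ⟨b, hb, hble⟩ := hkey a i (hA0 i a ha) x
      exact hble.trans (le_msup hb x)
    · -- upper bound
      by_cases hx0 : x = 0
      · subst hx0
        have h1 : G 0 i ≤ msup (Bset (0 : Fin n → ℝ)) (0 : Fin n → ℝ) := by
          rw [hGdef]
          exact Finset.inf'_le _ (Finset.mem_insert_self _ _)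
        have h2 : msup (Bset (0 : Fin n → ℝ)) 0 ≤ 0 := by
          apply msup_le (hBne i 0 (Finset.mem_insert_self _ _))
          intro b _
          simp
        rw [hF0]
        simpa using h1.trans h2
      · have hxn : 0 < ‖x‖ := norm_pos_iff.2 hx0
        set u := ‖x‖⁻¹ • x with hu
        have hu1 : ‖u‖ = 1 := by
          rw [hu, norm_smul, norm_inv, norm_norm]
          field_simp
        obtain ⟨y, hyN, hyu⟩ := hN u hu1
        set a := y - F y i • (1 : Fin n → ℝ) with ha
        have haA : a ∈ A i := by
          rw [hAdef]
          exact Finset.mem_insert_of_mem (Finset.mem_image_of_mem _ hyN)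
        have h1 : G x i ≤ msup (Bset a) x := by
          rw [hGdef]
          exact Finset.inf'_le _ haA
        refine h1.trans ?_
        apply msup_le (hBne i a haA)
        intro b hb
        obtain ⟨hb0, hb1, -⟩ := Bset_stochastic hb
        have hdot := Bset_dot_nonpos hb
        have e1 : ∑ j, b j * x j = ‖x‖ * ∑ j, b j * u j := by
          rw [Finset.mul_sum]
          apply Finset.sum_congr rfl
          intro j _
          rw [hu]
          simp only [Pi.smul_apply, smul_eq_mul]
          field_simp
        have e2 : ∑ j, b j * u j ≤ ∑ j, b j * y j + ‖u - y‖ := by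
          have step : ∑ j, b j * u j = ∑ j, b j * y j + ∑ j, b j * (u j - y j) := by
            rw [← Finset.sum_add_distrib]
            apply Finset.sum_congr rfl
            intro j _; ring
          rw [step]
          have hbound : ∑ j, b j * (u j - y j) ≤ ∑ j, b j * ‖u - y‖ := by
            apply Finset.sum_le_sum
            intro j _
            apply mul_le_mul_of_nonneg_left _ (hb0 j)
            have h3 : (u - y) j ≤ |(u - y) j| := le_abs_self _
            have h4 : |(u - y) j| ≤ ‖u - y‖ := by
              rw [← Real.norm_eq_abs]
              exact norm_le_pi_norm (u - y) j
            simpa using h3.trans h4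
          rw [← Finset.sum_mul, hb1, one_mul] at hbound
          linarith
        have e3 : ∑ j, b j * y j ≤ F y i := by
          have step : ∑ j, b j * a j = ∑ j, b j * y j - F y i := by
            have hterm : ∀ j, b j * a j = b j * y j - F y i * b j := by
              intro j
              rw [ha]
              simp only [Pi.sub_apply, Pi.smul_apply, Pi.one_apply, smul_eq_mul, mul_one]
              ring
            rw [Finset.sum_congr rfl (fun j _ => hterm j), Finset.sum_sub_distrib,
              ← Finset.mul_sum, hb1, mul_one]
          linarith [hdot, step]
        have e4 : F y i ≤ ‖x‖⁻¹ * F x i + ε / 2 := by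
          have h5 := hnonexp y u i
          have h6 : F u i = ‖x‖⁻¹ * F x i := by
            rw [hu, hpos _ (inv_nonneg.2 (le_of_lt hxn)) x]
            simp
          rw [h6, norm_sub_rev] at h5
          linarith [hyu]
        calc ∑ j, b j * x j = ‖x‖ * ∑ j, b j * u j := e1
          _ ≤ ‖x‖ * (‖x‖⁻¹ * F x i + ε / 2 + ε / 2) := by
              apply mul_le_mul_of_nonneg_left _ (le_of_lt hxn)
              linarith [e2, e3, e4, hyu]
          _ = F x i + ε * ‖x‖ := by
              field_simp
              ring
  · -- the structure
    intro i
    refine ⟨A i, fun a => Bset a, hAne i, ?_, ?_⟩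
    · intro a _ b hb
      exact Bset_stochastic hb
    · intro x
      constructor
      · obtain ⟨a, haA, hval⟩ := Finset.exists_mem_eq_inf' (hAne i) (fun a => msup (Bset a) x)
        refine ⟨a, haA, ?_⟩
        have hGx : G x i = msup (Bset a) x := hval
        rw [hGx]
        exact msup_isGreatest (hBne i a haA) x
      · rintro r ⟨a, haA, hgr⟩
        have h2 := msup_isGreatest (hBne i a haA) x
        have h3 : r = msup (Bset a) x := hgr.unique h2
        rw [h3]
        exact Finset.inf'_le _ haA
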